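/- Fix x₀ ∈ X. The space D̊^s_{p,q}(X) of sequences u: X → ℂ with u(x₀) = 0 and |du| ∈ I^s_{p,q}(X), equipped with the quasinorm u ↦ ‖du‖_{I^s_{p,q}(X)}, is complete for all 0 < s < ∞, 0 < p, q ≤ ∞; moreover, any Cauchy sequence in it converges pointwise on X. -/

import Mathlib

open MeasureTheory Metric Filter ENNReal NNReal

noncomputable section

/-- ℓ^p-type sum with weights, with the obvious modification (sup) when `p = ∞`. -/
def sumPartG {ι : Type*} (p : ℝ≥0∞) (w : ι → ℝ≥0∞) (f : ι → ℝ≥0∞) : ℝ≥0∞ :=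
  if p = ∞ then ⨆ i, f i else (∑' i, w i * f i ^ p.toReal) ^ (1 / p.toReal)

/-- The ball associated to a vertex `x` of the hyperbolic filling. -/
def vBall {Z X : Type*} [MetricSpace Z] (ξ : X → Z) (lvl : X → ℤ) (x : X) : Set Z :=
  Metric.ball (ξ x) ((2:ℝ) ^ (-(lvl x)))

/-- The sequence-space quasinorm of `I^s_{p,q}(X)`, for `g : X → ℝ≥0∞`. -/
def seqNorm {Z X : Type*} [MetricSpace Z] [MeasurableSpace Z] (μ : Measure Z)
    (ξ : X → Z) (lvl : X → ℤ) (s : ℝ) (p q : ℝ≥0∞) (g : X → ℝ≥0∞) : ℝ≥0∞ :=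
  sumPartG q (fun _ : ℤ => 1)
    (fun k => (2 : ℝ≥0∞) ^ ((k : ℝ) * s) *
      sumPartG p (fun x : {x : X // lvl x = k} => μ (vBall ξ lvl x.1)) (fun x => g x.1))

/-- The edge relation of the hyperbolic filling graph. -/
def edgeRel {Z X : Type*} [MetricSpace Z] (ξ : X → Z) (lvl : X → ℤ) (x y : X) : Prop :=
  x ≠ y ∧ |lvl x - lvl y| ≤ 1 ∧ (vBall ξ lvl x ∩ vBall ξ lvl y).Nonempty

/-- The magnitude `|du|` of the discrete derivative of `u : X → ℂ`. -/
def eDu {Z X : Type*} [MetricSpace Z] (ξ : X → Z) (lvl : X → ℤ) (u : X → ℂ) (x : X) : ℝ≥0∞ :=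
  (∑' y : {y : X // edgeRel ξ lvl x y}, (‖u y.1 - u x‖₊ : ℝ≥0∞) ^ (2:ℝ)) ^ ((1:ℝ)/2)

/-- The Poisson extension of `f`. -/
def poisson {Z X : Type*} [MetricSpace Z] [MeasurableSpace Z] (μ : Measure Z)
    (ξ : X → Z) (lvl : X → ℤ) (f : Z → ℂ) (x : X) : ℂ :=
  ⨍ z in vBall ξ lvl x, f z ∂μ

/-- The discrete convolution `T_n u = ∑_{|x| = n} u(x) ψ_x`. -/
def discConv {Z X : Type*} (lvl : X → ℤ) (ψ : X → Z → ℝ) (u : X → ℂ) (n : ℤ) (z : Z) : ℂ :=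
  ∑' x : {x : X // lvl x = n}, (ψ x.1 z : ℂ) * u x.1


set_option linter.unusedSectionVars false
set_option linter.unusedVariables false

namespace S14

lemma tsum_liminf_le {ι : Type*} (f : ℕ → ι → ℝ≥0∞) :
    ∑' i, liminf (fun n => f n i) atTop ≤ liminf (fun n => ∑' i, f n i) atTop := by
  letI : MeasurableSpace ι := ⊤
  calc ∑' i, liminf (fun n => f n i) atTop
      = ∫⁻ i, liminf (fun n => f n i) atTop ∂Measure.count :=
        (lintegral_count' measurable_from_top).symm
    _ ≤ liminf (fun n => ∫⁻ i, f n i ∂Measure.count) atTop :=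
        lintegral_liminf_le fun _ => measurable_from_top
    _ = _ := liminf_congr (Eventually.of_forall fun n => lintegral_count' measurable_from_top)

lemma rpow_liminf {r : ℝ} (hr : 0 < r) (a : ℕ → ℝ≥0∞) :
    liminf a atTop ^ r = liminf (fun n => a n ^ r) atTop := by
  have := Monotone.map_liminf_of_continuousAt (F := (atTop : Filter ℕ))
    (f := fun x : ℝ≥0∞ => x ^ r) (fun x y h => ENNReal.rpow_le_rpow h hr.le) a
    ENNReal.continuous_rpow_const.continuousAt
  simpa [Function.comp_def] using this

lemma constmul_liminf {c : ℝ≥0∞} (hc : c ≠ ∞) (a : ℕ → ℝ≥0∞) :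
    c * liminf a atTop = liminf (fun n => c * a n) atTop := by
  have := Monotone.map_liminf_of_continuousAt (F := (atTop : Filter ℕ))
    (f := fun x : ℝ≥0∞ => c * x) (fun x y h => mul_le_mul_right h c) a
    (ENNReal.continuous_const_mul hc).continuousAt
  simpa [Function.comp_def] using this

lemma sumPartG_mono {ι : Type*} (p : ℝ≥0∞) (w : ι → ℝ≥0∞) {f g : ι → ℝ≥0∞}
    (h : ∀ i, f i ≤ g i) : sumPartG p w f ≤ sumPartG p w g := by
  unfold sumPartG
  split
  · exact iSup_mono h
  · refine ENNReal.rpow_le_rpow (ENNReal.tsum_le_tsum fun i => ?_)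
      (one_div_nonneg.mpr ENNReal.toReal_nonneg)
    exact mul_le_mul_right (ENNReal.rpow_le_rpow (h i) ENNReal.toReal_nonneg) _

lemma sumPartG_const_mul {ι : Type*} {p : ℝ≥0∞} (hp : p ≠ 0) (w : ι → ℝ≥0∞)
    (c : ℝ≥0∞) (f : ι → ℝ≥0∞) :
    sumPartG p w (fun i => c * f i) = c * sumPartG p w f := by
  rcases eq_or_ne p ∞ with rfl | hptop
  · simp only [sumPartG, if_pos rfl, if_true]
    exact (ENNReal.mul_iSup c f).symm
  · have hpt : 0 < p.toReal := ENNReal.toReal_pos hp hptop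
    simp only [sumPartG, if_neg hptop]
    have h1 : ∀ i, w i * (c * f i) ^ p.toReal = c ^ p.toReal * (w i * f i ^ p.toReal) := fun i => by
      rw [ENNReal.mul_rpow_of_nonneg _ _ hpt.le]; ring
    rw [tsum_congr h1, ENNReal.tsum_mul_left,
      ENNReal.mul_rpow_of_nonneg _ _ (one_div_nonneg.mpr hpt.le),
      ← ENNReal.rpow_mul, mul_one_div, div_self hpt.ne', ENNReal.rpow_one]

lemma rpow_add_le {r : ℝ} (hr : 0 < r) (a b : ℝ≥0∞) :
    (a + b) ^ r ≤ 2 ^ r * (a ^ r + b ^ r) := by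
  have h1 : a + b ≤ 2 * (a ⊔ b) := by
    rw [two_mul]; exact add_le_add le_sup_left le_sup_right
  calc (a + b) ^ r ≤ (2 * (a ⊔ b)) ^ r := ENNReal.rpow_le_rpow h1 hr.le
    _ = 2 ^ r * (a ⊔ b) ^ r := ENNReal.mul_rpow_of_nonneg _ _ hr.le
    _ ≤ 2 ^ r * (a ^ r + b ^ r) := by
        refine mul_le_mul_right ?_ _
        rcases le_total a b with h | h
        · rw [sup_eq_right.mpr h]; exact (ENNReal.rpow_le_rpow le_rfl hr.le).trans le_add_self
        · rw [sup_eq_left.mpr h]; exact le_self_add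

def Kp (p : ℝ≥0∞) : ℝ≥0∞ := if p = ∞ then 1 else 2 * 2 ^ (1 / p.toReal)

lemma Kp_ne_top (p : ℝ≥0∞) : Kp p ≠ ∞ := by
  unfold Kp; split
  · exact one_ne_top
  · exact ENNReal.mul_ne_top (by norm_num)
      (ENNReal.rpow_lt_top_of_nonneg (one_div_nonneg.mpr ENNReal.toReal_nonneg)
        (by norm_num)).ne

lemma sumPartG_add_le {ι : Type*} {p : ℝ≥0∞} (hp : p ≠ 0) (w f g : ι → ℝ≥0∞) :
    sumPartG p w (fun i => f i + g i) ≤ Kp p * (sumPartG p w f + sumPartG p w g) := by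
  rcases eq_or_ne p ∞ with rfl | hptop
  · have e1 : Kp (⊤:ℝ≥0∞) = 1 := if_pos rfl
    have e2 : ∀ h : ι → ℝ≥0∞, sumPartG ⊤ w h = ⨆ i, h i := fun h => if_pos rfl
    rw [e1, e2, e2, e2, one_mul]
    exact iSup_le fun i => add_le_add (le_iSup f i) (le_iSup g i)
  · have hpt : 0 < p.toReal := ENNReal.toReal_pos hp hptop
    simp only [sumPartG, Kp, if_neg hptop]
    set r := p.toReal with hr
    set A := ∑' i, w i * f i ^ r with hA
    set B := ∑' i, w i * g i ^ r with hB
    have h1 : ∑' i, w i * (f i + g i) ^ r ≤ 2 ^ r * (A + B) := by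
      calc ∑' i, w i * (f i + g i) ^ r
          ≤ ∑' i, 2 ^ r * (w i * f i ^ r + w i * g i ^ r) := by
            refine ENNReal.tsum_le_tsum fun i => ?_
            calc w i * (f i + g i) ^ r ≤ w i * (2 ^ r * (f i ^ r + g i ^ r)) :=
              mul_le_mul_right (rpow_add_le hpt _ _) _
              _ = 2 ^ r * (w i * f i ^ r + w i * g i ^ r) := by ring
        _ = 2 ^ r * (A + B) := by rw [ENNReal.tsum_mul_left, ENNReal.tsum_add]
    calc (∑' i, w i * (f i + g i) ^ r) ^ (1 / r)
        ≤ (2 ^ r * (A + B)) ^ (1 / r) :=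
          ENNReal.rpow_le_rpow h1 (one_div_nonneg.mpr hpt.le)
      _ = 2 * (A + B) ^ (1 / r) := by
          rw [ENNReal.mul_rpow_of_nonneg _ _ (one_div_nonneg.mpr hpt.le), ← ENNReal.rpow_mul,
            mul_one_div, div_self hpt.ne', ENNReal.rpow_one]
      _ ≤ 2 * (2 ^ (1 / r) * (A ^ (1 / r) + B ^ (1 / r))) :=
          mul_le_mul_right (rpow_add_le (one_div_pos.mpr hpt) A B) _
      _ = 2 * 2 ^ (1 / r) * (A ^ (1 / r) + B ^ (1 / r)) := by ring

lemma sumPartG_liminf_le {ι : Type*} {p : ℝ≥0∞} (hp : p ≠ 0) (w : ι → ℝ≥0∞)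
    (hw : ∀ i, w i ≠ ∞) (f : ℕ → ι → ℝ≥0∞) :
    sumPartG p w (fun i => liminf (fun n => f n i) atTop)
      ≤ liminf (fun n => sumPartG p w (f n)) atTop := by
  rcases eq_or_ne p ∞ with rfl | hptop
  · simp only [sumPartG, if_pos rfl, if_true]
    exact iSup_le fun i =>
      liminf_le_liminf (Eventually.of_forall fun n => le_iSup (f n) i)
  · have hpt : 0 < p.toReal := ENNReal.toReal_pos hp hptop
    simp only [sumPartG, if_neg hptop]
    calc (∑' i, w i * liminf (fun n => f n i) atTop ^ p.toReal) ^ (1 / p.toReal)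
        = (∑' i, liminf (fun n => w i * f n i ^ p.toReal) atTop) ^ (1 / p.toReal) := by
          congr 1
          refine tsum_congr fun i => ?_
          rw [rpow_liminf hpt, constmul_liminf (hw i)]
      _ ≤ (liminf (fun n => ∑' i, w i * f n i ^ p.toReal) atTop) ^ (1 / p.toReal) :=
          ENNReal.rpow_le_rpow (tsum_liminf_le _) (one_div_nonneg.mpr hpt.le)
      _ = liminf (fun n => (∑' i, w i * f n i ^ p.toReal) ^ (1 / p.toReal)) atTop :=
          rpow_liminf (one_div_pos.mpr hpt) _


variable {Z X : Type*} [MetricSpace Z] [MeasurableSpace Z] (μ : Measure Z)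
  (ξ : X → Z) (lvl : X → ℤ) (s : ℝ) {p q : ℝ≥0∞}

lemma two_rpow_ne_top {t : ℝ} : ((2:ℝ≥0∞) ^ t) ≠ ∞ := by
  simp [ENNReal.rpow_eq_top_iff]

lemma seqNorm_mono {g₁ g₂ : X → ℝ≥0∞} (h : ∀ x, g₁ x ≤ g₂ x) :
    seqNorm μ ξ lvl s p q g₁ ≤ seqNorm μ ξ lvl s p q g₂ := by
  unfold seqNorm
  exact sumPartG_mono _ _ fun k =>
    mul_le_mul_right (sumPartG_mono _ _ fun x : {x : X // lvl x = k} => h x.1) _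

lemma seqNorm_const_mul (hp : p ≠ 0) (hq : q ≠ 0) (c : ℝ≥0∞) (g : X → ℝ≥0∞) :
    seqNorm μ ξ lvl s p q (fun x => c * g x) = c * seqNorm μ ξ lvl s p q g := by
  unfold seqNorm
  rw [← sumPartG_const_mul hq]
  congr 1
  funext k
  rw [sumPartG_const_mul hp]
  ring

lemma seqNorm_add_le (hp : p ≠ 0) (hq : q ≠ 0) (g₁ g₂ : X → ℝ≥0∞) :
    seqNorm μ ξ lvl s p q (fun x => g₁ x + g₂ x)
      ≤ Kp p * Kp q * (seqNorm μ ξ lvl s p q g₁ + seqNorm μ ξ lvl s p q g₂) := by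
  unfold seqNorm
  calc sumPartG q (fun _ : ℤ => 1)
        (fun k => (2 : ℝ≥0∞) ^ ((k : ℝ) * s) *
          sumPartG p (fun x : {x : X // lvl x = k} => μ (vBall ξ lvl x.1))
            (fun x => g₁ x.1 + g₂ x.1))
      ≤ sumPartG q (fun _ : ℤ => 1)
        (fun k => Kp p * ((2 : ℝ≥0∞) ^ ((k : ℝ) * s) *
            sumPartG p (fun x : {x : X // lvl x = k} => μ (vBall ξ lvl x.1)) (fun x => g₁ x.1) +
          (2 : ℝ≥0∞) ^ ((k : ℝ) * s) *
            sumPartG p (fun x : {x : X // lvl x = k} => μ (vBall ξ lvl x.1)) (fun x => g₂ x.1))) := by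
        refine sumPartG_mono _ _ fun k => ?_
        calc (2 : ℝ≥0∞) ^ ((k : ℝ) * s) *
              sumPartG p (fun x : {x : X // lvl x = k} => μ (vBall ξ lvl x.1))
                (fun x => g₁ x.1 + g₂ x.1)
            ≤ (2 : ℝ≥0∞) ^ ((k : ℝ) * s) * (Kp p *
              (sumPartG p (fun x : {x : X // lvl x = k} => μ (vBall ξ lvl x.1)) (fun x => g₁ x.1) +
               sumPartG p (fun x : {x : X // lvl x = k} => μ (vBall ξ lvl x.1)) (fun x => g₂ x.1))) :=
              mul_le_mul_right (sumPartG_add_le hp _ _ _) _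
          _ = _ := by ring
    _ = Kp p * sumPartG q (fun _ : ℤ => 1)
        (fun k => (2 : ℝ≥0∞) ^ ((k : ℝ) * s) *
            sumPartG p (fun x : {x : X // lvl x = k} => μ (vBall ξ lvl x.1)) (fun x => g₁ x.1) +
          (2 : ℝ≥0∞) ^ ((k : ℝ) * s) *
            sumPartG p (fun x : {x : X // lvl x = k} => μ (vBall ξ lvl x.1)) (fun x => g₂ x.1)) :=
        sumPartG_const_mul hq _ _ _
    _ ≤ Kp p * (Kp q * (_ + _)) := mul_le_mul_right (sumPartG_add_le hq _ _ _) _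
    _ = Kp p * Kp q * (_ + _) := (mul_assoc _ _ _).symm

set_option maxHeartbeats 1000000 in
lemma seqNorm_liminf_le (hp : p ≠ 0) (hq : q ≠ 0)
    (hw : ∀ x : X, μ (vBall ξ lvl x) ≠ ∞) (g : ℕ → X → ℝ≥0∞) :
    seqNorm μ ξ lvl s p q (fun x => liminf (fun n => g n x) atTop)
      ≤ liminf (fun n => seqNorm μ ξ lvl s p q (g n)) atTop := by
  unfold seqNorm
  calc sumPartG q (fun _ : ℤ => 1)
        (fun k => (2 : ℝ≥0∞) ^ ((k : ℝ) * s) *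
          sumPartG p (fun x : {x : X // lvl x = k} => μ (vBall ξ lvl x.1))
            (fun x => liminf (fun n => g n x.1) atTop))
      ≤ sumPartG q (fun _ : ℤ => 1)
        (fun k => liminf (fun n => (2 : ℝ≥0∞) ^ ((k : ℝ) * s) *
          sumPartG p (fun x : {x : X // lvl x = k} => μ (vBall ξ lvl x.1))
            (fun x => g n x.1)) atTop) := by
        refine sumPartG_mono _ _ fun k => ?_
        have h1 : sumPartG p (fun x : {x : X // lvl x = k} => μ (vBall ξ lvl x.1))
            (fun x => liminf (fun n => g n x.1) atTop)
            ≤ liminf (fun n => sumPartG p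
                (fun x : {x : X // lvl x = k} => μ (vBall ξ lvl x.1))
                (fun x => g n x.1)) atTop :=
          sumPartG_liminf_le (ι := {x : X // lvl x = k}) hp _ (fun x => hw x.1)
            (fun n x => g n x.1)
        have h2 := mul_le_mul_right h1 ((2 : ℝ≥0∞) ^ ((k : ℝ) * s))
        rw [constmul_liminf two_rpow_ne_top] at h2
        exact h2
    _ ≤ liminf (fun n => sumPartG q (fun _ : ℤ => 1)
        (fun k => (2 : ℝ≥0∞) ^ ((k : ℝ) * s) *
          sumPartG p (fun x : {x : X // lvl x = k} => μ (vBall ξ lvl x.1))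
            (fun x => g n x.1))) atTop :=
        sumPartG_liminf_le hq _ (fun _ => one_ne_top) _


lemma le_sumPartG_one {ι : Type*} {q : ℝ≥0∞} (hq : q ≠ 0) (F : ι → ℝ≥0∞) (i : ι) :
    F i ≤ sumPartG q (fun _ => 1) F := by
  rcases eq_or_ne q ∞ with rfl | hqtop
  · rw [show sumPartG ⊤ (fun _ : ι => (1:ℝ≥0∞)) F = ⨆ j, F j from if_pos rfl]
    exact le_iSup F i
  · have hqt : 0 < q.toReal := ENNReal.toReal_pos hq hqtop
    rw [show sumPartG q (fun _ : ι => (1:ℝ≥0∞)) F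
        = (∑' j, 1 * F j ^ q.toReal) ^ (1 / q.toReal) from if_neg hqtop]
    have h1 : F i ^ q.toReal ≤ ∑' j, 1 * F j ^ q.toReal := by
      simpa using ENNReal.le_tsum (f := fun j => 1 * F j ^ q.toReal) i
    have h2 := ENNReal.rpow_le_rpow h1 (one_div_nonneg.mpr hqt.le)
    rwa [← ENNReal.rpow_mul, mul_one_div, div_self hqt.ne', ENNReal.rpow_one] at h2

lemma le_sumPartG {ι : Type*} {p : ℝ≥0∞} (hp : p ≠ 0) (w F : ι → ℝ≥0∞) (i : ι)
    (hw0 : w i ≠ 0) (hwt : w i ≠ ∞) :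
    F i ≤ (if p = ∞ then 1 else (w i) ^ (-(1 / p.toReal))) * sumPartG p w F := by
  rcases eq_or_ne p ∞ with rfl | hptop
  · rw [if_pos rfl, one_mul, show sumPartG ⊤ w F = ⨆ j, F j from if_pos rfl]
    exact le_iSup F i
  · have hpt : 0 < p.toReal := ENNReal.toReal_pos hp hptop
    rw [if_neg hptop, show sumPartG p w F
        = (∑' j, w j * F j ^ p.toReal) ^ (1 / p.toReal) from if_neg hptop]
    have h2 : w i * F i ^ p.toReal ≤ ∑' j, w j * F j ^ p.toReal := ENNReal.le_tsum i
    have h4 := ENNReal.rpow_le_rpow h2 (one_div_nonneg.mpr hpt.le)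
    rw [ENNReal.mul_rpow_of_nonneg _ _ (one_div_nonneg.mpr hpt.le), ← ENNReal.rpow_mul,
      mul_one_div, div_self hpt.ne', ENNReal.rpow_one] at h4
    have h5 : (w i) ^ (-(1 / p.toReal)) * ((w i) ^ (1 / p.toReal) * F i) = F i := by
      rw [← mul_assoc, ← ENNReal.rpow_add _ _ hw0 hwt, neg_add_cancel, ENNReal.rpow_zero,
        one_mul]
    calc F i = (w i) ^ (-(1 / p.toReal)) * ((w i) ^ (1 / p.toReal) * F i) := h5.symm
      _ ≤ (w i) ^ (-(1 / p.toReal)) * (∑' j, w j * F j ^ p.toReal) ^ (1 / p.toReal) :=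
        mul_le_mul_right h4 _

variable {μ} {ξ} {lvl} {s} in
lemma point_bound (hp : p ≠ 0) (hq : q ≠ 0)
    (hpos : ∀ (ζ : Z) (r : ℝ), 0 < r → 0 < μ (Metric.ball ζ r))
    (hfin : ∀ (ζ : Z) (r : ℝ), μ (Metric.ball ζ r) < ∞) (x : X) :
    ∃ C : ℝ≥0∞, C ≠ ∞ ∧ ∀ g : X → ℝ≥0∞, g x ≤ C * seqNorm μ ξ lvl s p q g := by
  have hrad : (0:ℝ) < 2 ^ (-(lvl x)) := zpow_pos (by norm_num) _
  have hB0 : μ (vBall ξ lvl x) ≠ 0 := (hpos _ _ hrad).ne'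
  have hBt : μ (vBall ξ lvl x) ≠ ∞ := (hfin _ _).ne
  set c1 : ℝ≥0∞ := if p = ∞ then 1 else (μ (vBall ξ lvl x)) ^ (-(1 / p.toReal)) with hc1
  have hc1t : c1 ≠ ∞ := by
    rw [hc1]; split
    · exact one_ne_top
    · simp [ENNReal.rpow_eq_top_iff, hB0, hBt]
  refine ⟨c1 * 2 ^ (-((lvl x : ℝ) * s)), ENNReal.mul_ne_top hc1t two_rpow_ne_top, fun g => ?_⟩
  have step1 : g x ≤ c1 * sumPartG p
      (fun y : {y : X // lvl y = lvl x} => μ (vBall ξ lvl y.1)) (fun y => g y.1) :=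
    le_sumPartG hp (fun y : {y : X // lvl y = lvl x} => μ (vBall ξ lvl y.1))
      (fun y => g y.1) (⟨x, rfl⟩ : {y : X // lvl y = lvl x}) hB0 hBt
  have step2 : (2:ℝ≥0∞) ^ ((lvl x : ℝ) * s) *
      sumPartG p (fun y : {y : X // lvl y = lvl x} => μ (vBall ξ lvl y.1)) (fun y => g y.1)
      ≤ seqNorm μ ξ lvl s p q g := by
    unfold seqNorm
    exact le_sumPartG_one hq
      (fun k : ℤ => (2:ℝ≥0∞) ^ ((k : ℝ) * s) *
        sumPartG p (fun y : {y : X // lvl y = k} => μ (vBall ξ lvl y.1)) (fun y => g y.1))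
      (lvl x)
  have e1 : c1 * sumPartG p
      (fun y : {y : X // lvl y = lvl x} => μ (vBall ξ lvl y.1)) (fun y => g y.1)
      = c1 * 2 ^ (-((lvl x : ℝ) * s)) * ((2:ℝ≥0∞) ^ ((lvl x : ℝ) * s) *
        sumPartG p (fun y : {y : X // lvl y = lvl x} => μ (vBall ξ lvl y.1))
          (fun y => g y.1)) := by
    rw [mul_assoc, ← mul_assoc ((2:ℝ≥0∞) ^ (-((lvl x : ℝ) * s))),
      ← ENNReal.rpow_add _ _ (by norm_num) (by norm_num), neg_add_cancel, ENNReal.rpow_zero,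
      one_mul]
  calc g x ≤ _ := step1
    _ = _ := e1
    _ ≤ c1 * 2 ^ (-((lvl x : ℝ) * s)) * seqNorm μ ξ lvl s p q g := mul_le_mul_right step2 _

lemma edge_bound {x y : X} (hxy : edgeRel ξ lvl x y) (v : X → ℂ) :
    (‖v y - v x‖₊ : ℝ≥0∞) ≤ eDu ξ lvl v x := by
  have h1 : ((‖v y - v x‖₊ : ℝ≥0∞) ^ (2:ℝ))
      ≤ ∑' z : {z : X // edgeRel ξ lvl x z}, (‖v z.1 - v x‖₊ : ℝ≥0∞) ^ (2:ℝ) :=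
    ENNReal.le_tsum (⟨y, hxy⟩ : {z : X // edgeRel ξ lvl x z})
  have h2 := ENNReal.rpow_le_rpow h1 (by norm_num : (0:ℝ) ≤ 1/2)
  rw [← ENNReal.rpow_mul, show (2:ℝ) * (1/2) = 1 by norm_num, ENNReal.rpow_one] at h2
  exact h2

lemma edgeRel_symm {x y : X} (h : edgeRel ξ lvl x y) : edgeRel ξ lvl y x :=
  ⟨h.1.symm, by rw [abs_sub_comm]; exact h.2.1, by rw [Set.inter_comm]; exact h.2.2⟩

variable {ξ} {lvl} in
lemma reach_all
    (hsep : ∀ x y : X, x ≠ y → lvl x = lvl y → (2:ℝ) ^ (-lvl x - 1) ≤ dist (ξ x) (ξ y))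
    (hmax : ∀ (n : ℤ) (z : Z), ∃ x : X, lvl x = n ∧ dist z (ξ x) < (2:ℝ) ^ (-n - 1))
    (x₀ x : X) : Relation.ReflTransGen (edgeRel ξ lvl) x₀ x := by
  classical
  choose A hA1 hA2 using hmax
  have hlt : ∀ n : ℤ, (2:ℝ) ^ (-n - 1) < 2 ^ (-n) :=
    fun n => zpow_lt_zpow_right₀ one_lt_two (by omega)
  have hmem : ∀ (z : Z) (n : ℤ), z ∈ vBall ξ lvl (A n z) := by
    intro z n
    have h : dist z (ξ (A n z)) < (2:ℝ) ^ (-(lvl (A n z))) := by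
      rw [hA1]; exact (hA2 n z).trans (hlt n)
    exact Metric.mem_ball.mpr h
  have hlink : ∀ (a b : X) (z : Z), lvl a = lvl b → z ∈ vBall ξ lvl a → z ∈ vBall ξ lvl b →
      Relation.ReflTransGen (edgeRel ξ lvl) a b := by
    intro a b z hl hza hzb
    rcases eq_or_ne a b with rfl | hne
    · exact Relation.ReflTransGen.refl
    · exact Relation.ReflTransGen.single ⟨hne, by rw [hl]; simp, ⟨z, hza, hzb⟩⟩
  have hup : ∀ (z : Z) (n : ℤ), edgeRel ξ lvl (A n z) (A (n+1) z) := by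
    intro z n
    refine ⟨?_, ?_, ⟨z, hmem z n, hmem z (n+1)⟩⟩
    · intro h
      have h2 := hA1 n z
      rw [h, hA1] at h2
      omega
    · rw [hA1, hA1]
      have h3 : n - (n+1) = -1 := by ring
      rw [h3]; simp
  have hchain : ∀ (z : Z) (n : ℤ) (m : ℕ),
      Relation.ReflTransGen (edgeRel ξ lvl) (A n z) (A (n + m) z) := by
    intro z n m
    induction m with
    | zero =>
      have e : (n + ((0:ℕ):ℤ)) = n := by simp
      rw [e]
    | succ m ih =>
      have e : (n + (m + 1 : ℕ) : ℤ) = (n + m) + 1 := by push_cast; ring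
      rw [e]
      exact ih.tail (hup z (n + m))
  have hsymm : Symmetric (Relation.ReflTransGen (edgeRel ξ lvl)) :=
    by haveI : Std.Symm (edgeRel ξ lvl) := ⟨fun a b h => edgeRel_symm ξ lvl h⟩; exact fun a b h => Std.Symm.symm a b h
  obtain ⟨K, hK⟩ := pow_unbounded_of_one_lt (dist (ξ x) (ξ x₀)) (one_lt_two (α := ℝ))
  set n : ℤ := min (min (lvl x) (lvl x₀)) (-(K:ℤ) - 1) with hn
  have hnx : n ≤ lvl x := le_trans (min_le_left _ _) (min_le_left _ _)
  have hnx₀ : n ≤ lvl x₀ := le_trans (min_le_left _ _) (min_le_right _ _)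
  have hnK : (K:ℤ) ≤ -n - 1 := by
    have h := min_le_right (min (lvl x) (lvl x₀)) (-(K:ℤ) - 1)
    omega
  have hdist : dist (ξ x) (ξ x₀) < (2:ℝ) ^ (-n - 1) := by
    calc dist (ξ x) (ξ x₀) < 2 ^ K := hK
      _ = (2:ℝ) ^ (K:ℤ) := (zpow_natCast 2 K).symm
      _ ≤ (2:ℝ) ^ (-n - 1) := zpow_le_zpow_right₀ one_le_two hnK
  have hself : ∀ y : X, Relation.ReflTransGen (edgeRel ξ lvl) y (A (lvl y) (ξ y)) := by
    intro y
    refine hlink y _ (ξ y) (hA1 _ _).symm ?_ (hmem _ _)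
    exact Metric.mem_ball_self (zpow_pos (by norm_num) _)
  have hdown : ∀ y : X, n ≤ lvl y →
      Relation.ReflTransGen (edgeRel ξ lvl) (A n (ξ y)) (A (lvl y) (ξ y)) := by
    intro y hny
    have h := hchain (ξ y) n (lvl y - n).toNat
    have e : n + ((lvl y - n).toNat : ℤ) = lvl y := by
      rw [Int.toNat_of_nonneg (by omega)]; ring
    rwa [e] at h
  have r3 : Relation.ReflTransGen (edgeRel ξ lvl) (A n (ξ x)) (A n (ξ x₀)) := by
    refine hlink _ _ (ξ x₀) (by rw [hA1, hA1]) ?_ (hmem _ _)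
    have h1 : dist (ξ x₀) (ξ (A n (ξ x)))
        ≤ dist (ξ x₀) (ξ x) + dist (ξ x) (ξ (A n (ξ x))) := dist_triangle _ _ _
    have h2 : dist (ξ x₀) (ξ x) < (2:ℝ) ^ (-n - 1) := by rw [dist_comm]; exact hdist
    have h3 : dist (ξ x) (ξ (A n (ξ x))) < (2:ℝ) ^ (-n - 1) := hA2 _ _
    have h5 : (2:ℝ) ^ (-n-1) + 2 ^ (-n-1) = 2 ^ (-n) := by
      rw [← two_mul, show (-n : ℤ) = (-n-1) + 1 from by ring,
        zpow_add_one₀ (two_ne_zero : (2:ℝ) ≠ 0)]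
      ring
    have h4 : dist (ξ x₀) (ξ (A n (ξ x))) < (2:ℝ) ^ (-(lvl (A n (ξ x)))) := by
      rw [hA1]; linarith
    exact Metric.mem_ball.mpr h4
  exact ((((hself x₀).trans (hsymm (hdown x₀ hnx₀))).trans (hsymm r3)).trans
    (hdown x hnx)).trans (hsymm (hself x))

variable {μ} {ξ} {lvl} {s} in
lemma path_bound (hp : p ≠ 0) (hq : q ≠ 0)
    (hpos : ∀ (ζ : Z) (r : ℝ), 0 < r → 0 < μ (Metric.ball ζ r))
    (hfin : ∀ (ζ : Z) (r : ℝ), μ (Metric.ball ζ r) < ∞)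
    (hsep : ∀ x y : X, x ≠ y → lvl x = lvl y → (2:ℝ) ^ (-lvl x - 1) ≤ dist (ξ x) (ξ y))
    (hmax : ∀ (n : ℤ) (z : Z), ∃ x : X, lvl x = n ∧ dist z (ξ x) < (2:ℝ) ^ (-n - 1))
    (x₀ x : X) :
    ∃ C : ℝ≥0∞, C ≠ ∞ ∧ ∀ v : X → ℂ,
      (‖v x - v x₀‖₊ : ℝ≥0∞) ≤ C * seqNorm μ ξ lvl s p q (eDu ξ lvl v) := by
  have hreach := reach_all hsep hmax x₀ x
  induction hreach with
  | refl => exact ⟨0, zero_ne_top, fun v => by simp⟩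
  | @tail b c hab hbc ih =>
    obtain ⟨C, hCt, hCb⟩ := ih
    obtain ⟨D, hDt, hDb⟩ := point_bound hp hq hpos hfin b
    refine ⟨C + D, ENNReal.add_ne_top.mpr ⟨hCt, hDt⟩, fun v => ?_⟩
    have h1 : (‖v c - v x₀‖₊ : ℝ≥0∞) ≤ (‖v c - v b‖₊ : ℝ≥0∞) + (‖v b - v x₀‖₊ : ℝ≥0∞) := by
      have e : v c - v x₀ = (v c - v b) + (v b - v x₀) := by ring
      rw [e]
      exact_mod_cast nnnorm_add_le _ _
    calc (‖v c - v x₀‖₊ : ℝ≥0∞)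
        ≤ (‖v c - v b‖₊ : ℝ≥0∞) + (‖v b - v x₀‖₊ : ℝ≥0∞) := h1
      _ ≤ eDu ξ lvl v b + C * seqNorm μ ξ lvl s p q (eDu ξ lvl v) :=
          add_le_add (edge_bound ξ lvl hbc v) (hCb v)
      _ ≤ D * seqNorm μ ξ lvl s p q (eDu ξ lvl v)
            + C * seqNorm μ ξ lvl s p q (eDu ξ lvl v) :=
          add_le_add_left (hDb (eDu ξ lvl v)) _
      _ = (C + D) * seqNorm μ ξ lvl s p q (eDu ξ lvl v) := by ring

end S14

namespace S14

variable {Z X : Type*} [MetricSpace Z] (ξ : X → Z) (lvl : X → ℤ)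

lemma eDu_neg_sub (v w : X → ℂ) :
    eDu ξ lvl (fun y => v y - w y) = eDu ξ lvl (fun y => w y - v y) := by
  funext x
  unfold eDu
  congr 1
  refine tsum_congr fun y => ?_
  congr 1
  rw [show (v y.1 - w y.1) - (v x - w x) = -((w y.1 - v y.1) - (w x - v x)) from by ring,
    nnnorm_neg]

lemma eDu_add_le (v w : X → ℂ) (x : X) :
    eDu ξ lvl (fun y => v y + w y) x
      ≤ 2 * 2 ^ ((1:ℝ)/2) * (eDu ξ lvl v x + eDu ξ lvl w x) := by
  unfold eDu
  set S1 := ∑' y : {y : X // edgeRel ξ lvl x y}, (‖v y.1 - v x‖₊ : ℝ≥0∞) ^ (2:ℝ) with hS1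
  set S2 := ∑' y : {y : X // edgeRel ξ lvl x y}, (‖w y.1 - w x‖₊ : ℝ≥0∞) ^ (2:ℝ) with hS2
  have hterm : ∀ y : {y : X // edgeRel ξ lvl x y},
      (‖(v y.1 + w y.1) - (v x + w x)‖₊ : ℝ≥0∞) ^ (2:ℝ)
        ≤ 2 ^ (2:ℝ) * ((‖v y.1 - v x‖₊ : ℝ≥0∞) ^ (2:ℝ) + (‖w y.1 - w x‖₊ : ℝ≥0∞) ^ (2:ℝ)) := by
    intro y
    have h1 : (‖(v y.1 + w y.1) - (v x + w x)‖₊ : ℝ≥0∞)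
        ≤ (‖v y.1 - v x‖₊ : ℝ≥0∞) + (‖w y.1 - w x‖₊ : ℝ≥0∞) := by
      have e : (v y.1 + w y.1) - (v x + w x) = (v y.1 - v x) + (w y.1 - w x) := by ring
      rw [e]; exact_mod_cast nnnorm_add_le _ _
    calc (‖(v y.1 + w y.1) - (v x + w x)‖₊ : ℝ≥0∞) ^ (2:ℝ)
        ≤ ((‖v y.1 - v x‖₊ : ℝ≥0∞) + (‖w y.1 - w x‖₊ : ℝ≥0∞)) ^ (2:ℝ) :=
          ENNReal.rpow_le_rpow h1 (by norm_num)
      _ ≤ 2 ^ (2:ℝ) * ((‖v y.1 - v x‖₊ : ℝ≥0∞) ^ (2:ℝ) + (‖w y.1 - w x‖₊ : ℝ≥0∞) ^ (2:ℝ)) :=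
          rpow_add_le (by norm_num) _ _
  calc (∑' y : {y : X // edgeRel ξ lvl x y},
        (‖(fun y => v y + w y) y.1 - (fun y => v y + w y) x‖₊ : ℝ≥0∞) ^ (2:ℝ)) ^ ((1:ℝ)/2)
      ≤ (2 ^ (2:ℝ) * (S1 + S2)) ^ ((1:ℝ)/2) := by
        refine ENNReal.rpow_le_rpow ?_ (by norm_num)
        calc ∑' y : {y : X // edgeRel ξ lvl x y},
              (‖(fun y => v y + w y) y.1 - (fun y => v y + w y) x‖₊ : ℝ≥0∞) ^ (2:ℝ)
            ≤ ∑' y : {y : X // edgeRel ξ lvl x y},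
              2 ^ (2:ℝ) * ((‖v y.1 - v x‖₊ : ℝ≥0∞) ^ (2:ℝ) + (‖w y.1 - w x‖₊ : ℝ≥0∞) ^ (2:ℝ)) :=
              ENNReal.tsum_le_tsum fun y => hterm y
          _ = 2 ^ (2:ℝ) * (S1 + S2) := by rw [ENNReal.tsum_mul_left, ENNReal.tsum_add]
    _ = 2 * (S1 + S2) ^ ((1:ℝ)/2) := by
        rw [ENNReal.mul_rpow_of_nonneg _ _ (by norm_num : (0:ℝ) ≤ 1/2), ← ENNReal.rpow_mul]
        norm_num
    _ ≤ 2 * (2 ^ ((1:ℝ)/2) * (S1 ^ ((1:ℝ)/2) + S2 ^ ((1:ℝ)/2))) :=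
        mul_le_mul_right (rpow_add_le (by norm_num) _ _) _
    _ = 2 * 2 ^ ((1:ℝ)/2) * (S1 ^ ((1:ℝ)/2) + S2 ^ ((1:ℝ)/2)) := by ring

end S14

/-- the space `D̊^s_{p,q}(X)` of sequences vanishing at `x₀` with
`|du| ∈ I^s_{p,q}(X)`, with quasinorm `u ↦ ‖du‖`, is complete, and Cauchy sequences in it
converge pointwise on `X`. -/
theorem statement14 {Z : Type*} [MetricSpace Z] [MeasurableSpace Z] [BorelSpace Z]
    (μ : Measure Z) (c : ℝ≥0) (hc : 1 ≤ c)
    (hdoub : ∀ (ζ : Z) (r : ℝ), 0 < r → μ (Metric.ball ζ (2 * r)) ≤ c * μ (Metric.ball ζ r))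
    (hpos : ∀ (ζ : Z) (r : ℝ), 0 < r → 0 < μ (Metric.ball ζ r))
    (hfin : ∀ (ζ : Z) (r : ℝ), μ (Metric.ball ζ r) < ∞)
    {X : Type*} (ξ : X → Z) (lvl : X → ℤ)
    (hsep : ∀ x y : X, x ≠ y → lvl x = lvl y → (2:ℝ) ^ (-lvl x - 1) ≤ dist (ξ x) (ξ y))
    (hmax : ∀ (n : ℤ) (z : Z), ∃ x : X, lvl x = n ∧ dist z (ξ x) < (2:ℝ) ^ (-n - 1))
    (x₀ : X) (s : ℝ) (hs : 0 < s) (p q : ℝ≥0∞) (hp : 0 < p) (hq : 0 < q) :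
    ∀ U : ℕ → X → ℂ,
      (∀ n, U n x₀ = 0 ∧ seqNorm μ ξ lvl s p q (eDu ξ lvl (U n)) < ∞) →
      (∀ ε : ℝ≥0∞, 0 < ε → ∃ M : ℕ, ∀ m n : ℕ, M ≤ m → M ≤ n →
        seqNorm μ ξ lvl s p q (eDu ξ lvl (fun x => U m x - U n x)) < ε) →
      ∃ u : X → ℂ, u x₀ = 0 ∧ seqNorm μ ξ lvl s p q (eDu ξ lvl u) < ∞ ∧
        Filter.Tendsto (fun n => seqNorm μ ξ lvl s p q (eDu ξ lvl (fun x => U n x - u x)))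
          Filter.atTop (nhds 0) ∧
        ∀ x : X, Filter.Tendsto (fun n => U n x) Filter.atTop (nhds (u x)) := by
  intro U hU hC
  have hp' : p ≠ 0 := hp.ne'
  have hq' : q ≠ 0 := hq.ne'
  -- pointwise convergence
  have hcauchy : ∀ x : X, ∃ l : ℂ, Tendsto (fun n => U n x) atTop (nhds l) := by
    intro x
    obtain ⟨C, hCt, hCb⟩ :=
      S14.path_bound (p := p) (q := q) hp' hq' hpos hfin hsep hmax x₀ x
    apply cauchySeq_tendsto_of_complete
    rw [Metric.cauchySeq_iff]
    intro ε hε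
    have hden0 : C + 1 ≠ 0 := by simp
    have hdent : C + 1 ≠ ∞ := ENNReal.add_ne_top.mpr ⟨hCt, one_ne_top⟩
    set δ : ℝ≥0∞ := (ENNReal.ofReal ε / 2) / (C + 1) with hδ
    have hδ0 : 0 < δ :=
      ENNReal.div_pos (ENNReal.div_pos (ENNReal.ofReal_pos.mpr hε).ne' (by norm_num)).ne' hdent
    obtain ⟨M, hM⟩ := hC δ hδ0
    refine ⟨M, fun m hm n hn => ?_⟩
    have h1 := hCb (fun y => U m y - U n y)
    simp only [(hU m).1, (hU n).1, sub_zero] at h1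
    have h2 : C * seqNorm μ ξ lvl s p q (eDu ξ lvl (fun y => U m y - U n y))
        ≤ ENNReal.ofReal ε / 2 := by
      calc C * seqNorm μ ξ lvl s p q (eDu ξ lvl (fun y => U m y - U n y))
          ≤ (C + 1) * δ := mul_le_mul' le_self_add (hM m n hm hn).le
        _ = ENNReal.ofReal ε / 2 := ENNReal.mul_div_cancel hden0 hdent
    have h3 : (‖U m x - U n x‖₊ : ℝ≥0∞) < ENNReal.ofReal ε :=
      lt_of_le_of_lt (h1.trans h2)
        (ENNReal.half_lt_self (ENNReal.ofReal_pos.mpr hε).ne' ENNReal.ofReal_ne_top)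
    rw [← ENNReal.ofReal_coe_nnreal, coe_nnnorm] at h3
    rw [dist_eq_norm]
    exact (ENNReal.ofReal_lt_ofReal_iff hε).mp h3
  choose u htend using hcauchy
  have hu0 : u x₀ = 0 := by
    have h0 : Tendsto (fun n => U n x₀) atTop (nhds (0:ℂ)) := by
      have e : (fun n => U n x₀) = fun _ => (0:ℂ) := funext fun n => (hU n).1
      rw [e]; exact tendsto_const_nhds
    exact tendsto_nhds_unique (htend x₀) h0
  have hwfin : ∀ x : X, μ (vBall ξ lvl x) ≠ ∞ := fun x => (hfin _ _).ne
  -- Fatou-type lower semicontinuity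
  have hfatou : ∀ m : ℕ,
      seqNorm μ ξ lvl s p q (eDu ξ lvl (fun x => U m x - u x))
        ≤ liminf (fun n => seqNorm μ ξ lvl s p q
            (eDu ξ lvl (fun x => U m x - U n x))) atTop := by
    intro m
    have hpt : ∀ x : X, eDu ξ lvl (fun y => U m y - u y) x
        ≤ liminf (fun n => eDu ξ lvl (fun y => U m y - U n y) x) atTop := by
      intro x
      have hterm : ∀ y : {y : X // edgeRel ξ lvl x y},
          (‖(U m y.1 - u y.1) - (U m x - u x)‖₊ : ℝ≥0∞) ^ (2:ℝ)
            = liminf (fun n =>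
                (‖(U m y.1 - U n y.1) - (U m x - U n x)‖₊ : ℝ≥0∞) ^ (2:ℝ)) atTop := by
        intro y
        refine (Filter.Tendsto.liminf_eq ?_).symm
        have h1 : Tendsto (fun n => (U m y.1 - U n y.1) - (U m x - U n x)) atTop
            (nhds ((U m y.1 - u y.1) - (U m x - u x))) :=
          (tendsto_const_nhds.sub (htend y.1)).sub (tendsto_const_nhds.sub (htend x))
        have h2 : Tendsto (fun n => ((‖(U m y.1 - U n y.1) - (U m x - U n x)‖₊ : ℝ≥0∞)))
            atTop (nhds ((‖(U m y.1 - u y.1) - (U m x - u x)‖₊ : ℝ≥0∞))) :=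
          ENNReal.tendsto_coe.mpr h1.nnnorm
        exact (ENNReal.continuous_rpow_const.tendsto _).comp h2
      calc eDu ξ lvl (fun y => U m y - u y) x
          = (∑' y : {y : X // edgeRel ξ lvl x y},
              liminf (fun n =>
                (‖(U m y.1 - U n y.1) - (U m x - U n x)‖₊ : ℝ≥0∞) ^ (2:ℝ)) atTop) ^ ((1:ℝ)/2) := by
            unfold eDu
            congr 1
            exact tsum_congr fun y => hterm y
        _ ≤ (liminf (fun n => ∑' y : {y : X // edgeRel ξ lvl x y},
              (‖(U m y.1 - U n y.1) - (U m x - U n x)‖₊ : ℝ≥0∞) ^ (2:ℝ)) atTop) ^ ((1:ℝ)/2) :=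
            ENNReal.rpow_le_rpow (S14.tsum_liminf_le _) (by norm_num)
        _ = liminf (fun n => (∑' y : {y : X // edgeRel ξ lvl x y},
              (‖(U m y.1 - U n y.1) - (U m x - U n x)‖₊ : ℝ≥0∞) ^ (2:ℝ)) ^ ((1:ℝ)/2)) atTop :=
            S14.rpow_liminf (by norm_num) _
        _ = liminf (fun n => eDu ξ lvl (fun y => U m y - U n y) x) atTop := rfl
    calc seqNorm μ ξ lvl s p q (eDu ξ lvl (fun x => U m x - u x))
        ≤ seqNorm μ ξ lvl s p q
            (fun x => liminf (fun n => eDu ξ lvl (fun y => U m y - U n y) x) atTop) :=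
          S14.seqNorm_mono μ ξ lvl s hpt
      _ ≤ liminf (fun n => seqNorm μ ξ lvl s p q
            (eDu ξ lvl (fun x => U m x - U n x))) atTop :=
          S14.seqNorm_liminf_le μ ξ lvl s hp' hq' hwfin
            (fun n => eDu ξ lvl (fun y => U m y - U n y))
  have key : ∀ ε : ℝ≥0∞, 0 < ε → ∃ M : ℕ, ∀ m, M ≤ m →
      seqNorm μ ξ lvl s p q (eDu ξ lvl (fun x => U m x - u x)) ≤ ε := by
    intro ε hε
    obtain ⟨M, hM⟩ := hC ε hε
    refine ⟨M, fun m hm => (hfatou m).trans ?_⟩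
    exact Filter.liminf_le_of_frequently_le
      (((eventually_ge_atTop M).mono fun n hn => (hM m n hm hn).le).frequently)
  have hT : Tendsto (fun n => seqNorm μ ξ lvl s p q
      (eDu ξ lvl (fun x => U n x - u x))) atTop (nhds 0) := by
    rw [ENNReal.tendsto_atTop_zero]
    intro ε hε
    obtain ⟨M, hM⟩ := key ε hε
    exact ⟨M, hM⟩
  obtain ⟨M₀, hM₀⟩ := key 1 zero_lt_one
  have hN1 : seqNorm μ ξ lvl s p q (eDu ξ lvl (fun y => u y - U M₀ y)) ≤ 1 := by
    rw [S14.eDu_neg_sub ξ lvl u (U M₀)]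
    exact hM₀ M₀ le_rfl
  set K0 : ℝ≥0∞ := 2 * 2 ^ ((1:ℝ)/2) with hK0
  have hK0t : K0 ≠ ∞ := ENNReal.mul_ne_top (by norm_num) S14.two_rpow_ne_top
  have hptw : ∀ x : X, eDu ξ lvl u x
      ≤ K0 * (eDu ξ lvl (fun y => u y - U M₀ y) x + eDu ξ lvl (U M₀) x) := by
    intro x
    have h := S14.eDu_add_le ξ lvl (fun y => u y - U M₀ y) (U M₀) x
    have e : (fun y => (u y - U M₀ y) + U M₀ y) = u := funext fun y => by ring
    rw [e] at h
    exact h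
  have hfin2 : seqNorm μ ξ lvl s p q (eDu ξ lvl u) < ∞ := by
    have h1 : seqNorm μ ξ lvl s p q (eDu ξ lvl u)
        ≤ K0 * seqNorm μ ξ lvl s p q
            (fun x => eDu ξ lvl (fun y => u y - U M₀ y) x + eDu ξ lvl (U M₀) x) := by
      refine le_trans (S14.seqNorm_mono μ ξ lvl s hptw) ?_
      rw [S14.seqNorm_const_mul μ ξ lvl s hp' hq']
    have h2 := S14.seqNorm_add_le μ ξ lvl s hp' hq'
      (eDu ξ lvl (fun y => u y - U M₀ y)) (eDu ξ lvl (U M₀))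
    calc seqNorm μ ξ lvl s p q (eDu ξ lvl u)
        ≤ K0 * (S14.Kp p * S14.Kp q *
            (seqNorm μ ξ lvl s p q (eDu ξ lvl (fun y => u y - U M₀ y)) +
             seqNorm μ ξ lvl s p q (eDu ξ lvl (U M₀)))) :=
          h1.trans (mul_le_mul_right h2 _)
      _ < ∞ := by
          apply ENNReal.mul_lt_top hK0t.lt_top
          apply ENNReal.mul_lt_top
            (ENNReal.mul_lt_top (S14.Kp_ne_top p).lt_top (S14.Kp_ne_top q).lt_top)
          exact ENNReal.add_lt_top.mpr
            ⟨lt_of_le_of_lt hN1 ENNReal.one_lt_top, (hU M₀).2⟩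
  exact ⟨u, hu0, hfin2, hT, htend⟩
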